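/- As formal power series in z over Q(q): ∏_{i=0}^∞ (1 + q^i z) = Σ_{n=0}^∞ q^{n(n-1)/2} z^n / ((1-q)(1-q^2)⋯(1-q^n)). -/

import Mathlib

open PowerSeries Finset

namespace Stmt9Aux

instance finAux (n m : ℕ) : Finite {s : Finset ℕ // s.card = n ∧ ∑ i ∈ s, i = m} := by
  have h : {s : Finset ℕ | s.card = n ∧ ∑ i ∈ s, i = m} ⊆
      ↑((Finset.range (m + 1)).powerset) := by
    rintro s ⟨hc, hs⟩
    simp only [Finset.coe_powerset, Set.mem_preimage, Set.mem_powerset_iff,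
      Finset.coe_subset] at *
    intro i hi
    have : i ≤ ∑ j ∈ s, j := Finset.single_le_sum (fun j _ => Nat.zero_le j) hi
    simp only [Finset.mem_coe, Finset.mem_range]
    omega
  exact (Set.Finite.subset ((Finset.range (m + 1)).powerset.finite_toSet) h).to_subtype

noncomputable def a (n m : ℕ) : ℕ :=
  Nat.card {s : Finset ℕ // s.card = n ∧ ∑ i ∈ s, i = m}

lemma a_zero (m : ℕ) : a 0 m = if m = 0 then 1 else 0 := by
  unfold a
  split
  · rename_i hm
    subst hm
    haveI : Unique {s : Finset ℕ // s.card = 0 ∧ ∑ i ∈ s, i = 0} :=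
      { default := ⟨∅, by simp⟩
        uniq := by rintro ⟨s, hs, -⟩; ext1; simpa using Finset.card_eq_zero.mp hs }
    exact Nat.card_unique
  · rename_i hm
    haveI : IsEmpty {s : Finset ℕ // s.card = 0 ∧ ∑ i ∈ s, i = m} := by
      constructor
      rintro ⟨s, hs, hsum⟩
      rw [Finset.card_eq_zero] at hs
      subst hs
      simp at hsum
      exact hm hsum.symm
    exact Nat.card_of_isEmpty

lemma card_split (p q : Finset ℕ → Prop) [Finite {s // p s}] :
    Nat.card {s // p s} =
      Nat.card {s // p s ∧ q s} + Nat.card {s // p s ∧ ¬ q s} := by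
  classical
  haveI : Finite {s // p s ∧ q s} :=
    Finite.of_injective (fun x => (⟨x.1, x.2.1⟩ : {s // p s}))
      (by rintro ⟨a, _⟩ ⟨b, _⟩ h; simpa using h)
  haveI : Finite {s // p s ∧ ¬ q s} :=
    Finite.of_injective (fun x => (⟨x.1, x.2.1⟩ : {s // p s}))
      (by rintro ⟨a, _⟩ ⟨b, _⟩ h; simpa using h)
  have e : {s // p s ∧ q s} ⊕ {s // p s ∧ ¬ q s} ≃ {s // p s} :=
    (Equiv.sumCongr (Equiv.subtypeSubtypeEquivSubtypeInter p q).symm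
      (Equiv.subtypeSubtypeEquivSubtypeInter p (fun s => ¬ q s)).symm).trans
      (Equiv.sumCompl (fun x : {s // p s} => q x.1))
  rw [← Nat.card_congr e, Nat.card_sum]

lemma notmem_equiv (n m : ℕ) :
    Nat.card {s : Finset ℕ // (s.card = n ∧ ∑ i ∈ s, i = m + n) ∧ 0 ∉ s} = a n m := by
  unfold a
  apply Nat.card_congr
  symm
  refine Equiv.ofBijective (fun t => ⟨t.1.image (· + 1), ?_, ?_⟩) ⟨?_, ?_⟩
  · constructor
    · rw [Finset.card_image_of_injective _ (add_left_injective 1)]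
      exact t.2.1
    · rw [Finset.sum_image (fun x _ y _ h => by omega), Finset.sum_add_distrib,
        t.2.2, Finset.sum_const, t.2.1]
      simp [mul_comm]
  · simp
  · rintro ⟨s, hs⟩ ⟨t, ht⟩ h
    simp only [Subtype.mk.injEq] at h ⊢
    exact Finset.image_injective (add_left_injective 1) h
  · rintro ⟨s, ⟨⟨hc, hsum⟩, h0⟩⟩
    refine ⟨⟨s.image (· - 1), ?_, ?_⟩, ?_⟩
    · rw [Finset.card_image_of_injOn (fun x hx y hy h => by
        have hx1 : 1 ≤ x := Nat.one_le_iff_ne_zero.mpr (fun h' => h0 (h' ▸ hx))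
        have hy1 : 1 ≤ y := Nat.one_le_iff_ne_zero.mpr (fun h' => h0 (h' ▸ hy))
        omega)]
      exact hc
    · rw [Finset.sum_image (fun x hx y hy h => by
        have hx1 : 1 ≤ x := Nat.one_le_iff_ne_zero.mpr (fun h' => h0 (h' ▸ hx))
        have hy1 : 1 ≤ y := Nat.one_le_iff_ne_zero.mpr (fun h' => h0 (h' ▸ hy))
        omega)]
      have : ∀ x ∈ s, 1 ≤ x := fun x hx =>
        Nat.one_le_iff_ne_zero.mpr (fun h' => h0 (h' ▸ hx))
      have h1 : (∑ i ∈ s, (i - 1)) + (∑ i ∈ s, 1) = ∑ i ∈ s, i := by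
        rw [← Finset.sum_add_distrib]
        exact Finset.sum_congr rfl (fun x hx => by have := this x hx; omega)
      have h2 : (∑ i ∈ s, 1) = n := by rw [Finset.sum_const, hc]; simp
      omega
    · ext1
      simp only
      rw [Finset.image_image]
      refine Eq.trans ?_ (Finset.image_id (s := s))
      refine Finset.image_congr (fun x hx => ?_)
      have : 1 ≤ x := Nat.one_le_iff_ne_zero.mpr (fun h' => h0 (h' ▸ hx))
      simp only [Function.comp_apply, id_eq]
      omega

lemma mem_equiv (n m : ℕ) :
    Nat.card {s : Finset ℕ // (s.card = n + 1 ∧ ∑ i ∈ s, i = m + n) ∧ 0 ∈ s} = a n m := by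
  unfold a
  apply Nat.card_congr
  symm
  have hnot : ∀ t : Finset ℕ, 0 ∉ t.image (· + 1) := by simp
  refine Equiv.ofBijective (fun t => ⟨insert 0 (t.1.image (· + 1)), ⟨?_, ?_⟩, by simp⟩) ⟨?_, ?_⟩
  · rw [Finset.card_insert_of_notMem (hnot _),
      Finset.card_image_of_injective _ (add_left_injective 1), t.2.1]
  · rw [Finset.sum_insert (hnot _), Finset.sum_image (fun x _ y _ h => by omega),
      Finset.sum_add_distrib, t.2.2, Finset.sum_const, t.2.1]
    simp [mul_comm]
  · rintro ⟨s, hs⟩ ⟨t, ht⟩ h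
    simp only [Subtype.mk.injEq] at h ⊢
    have h' : (insert 0 (s.image (· + 1))).erase 0 = (insert 0 (t.image (· + 1))).erase 0 := by
      rw [h]
    rw [Finset.erase_insert (hnot s), Finset.erase_insert (hnot t)] at h'
    exact Finset.image_injective (add_left_injective 1) h'
  · rintro ⟨s, ⟨⟨hc, hsum⟩, h0⟩⟩
    have h1 : ∀ x ∈ s.erase 0, 1 ≤ x := fun x hx =>
      Nat.one_le_iff_ne_zero.mpr (Finset.ne_of_mem_erase hx)
    refine ⟨⟨(s.erase 0).image (· - 1), ?_, ?_⟩, ?_⟩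
    · rw [Finset.card_image_of_injOn (fun x hx y hy h => by
        have := h1 x hx; have := h1 y hy; omega),
        Finset.card_erase_of_mem h0, hc]
      omega
    · rw [Finset.sum_image (fun x hx y hy h => by
        have := h1 x hx; have := h1 y hy; omega)]
      have he : (∑ i ∈ s.erase 0, (i - 1)) + (∑ i ∈ s.erase 0, 1) = ∑ i ∈ s.erase 0, i := by
        rw [← Finset.sum_add_distrib]
        exact Finset.sum_congr rfl (fun x hx => by have := h1 x hx; omega)
      have h2 : (∑ i ∈ s.erase 0, 1) = n := by
        rw [Finset.sum_const, Finset.card_erase_of_mem h0, hc]; simp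
      have h3 : ∑ i ∈ s.erase 0, i = m + n := by
        have := Finset.add_sum_erase s (fun i => i) h0
        omega
      omega
    · ext1
      simp only
      rw [Finset.image_image]
      have : Finset.image ((· + 1) ∘ (· - 1)) (s.erase 0) = s.erase 0 := by
        refine Eq.trans ?_ (Finset.image_id (s := s.erase 0))
        refine Finset.image_congr (fun x hx => ?_)
        have := h1 x hx
        simp only [Function.comp_apply, id_eq]
        omega
      rw [this, Finset.insert_erase h0]

lemma notmem_empty (n m : ℕ) (h : m < n) :
    IsEmpty {s : Finset ℕ // (s.card = n ∧ ∑ i ∈ s, i = m) ∧ 0 ∉ s} := by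
  constructor
  rintro ⟨s, ⟨hc, hsum⟩, h0⟩
  have : s.card • 1 ≤ ∑ i ∈ s, i :=
    Finset.card_nsmul_le_sum s _ 1 (fun x hx =>
      Nat.one_le_iff_ne_zero.mpr (fun h' => h0 (h' ▸ hx)))
  simp only [smul_eq_mul, mul_one, hc, hsum] at this
  omega

lemma mem_empty (n m : ℕ) (h : m < n) :
    IsEmpty {s : Finset ℕ // (s.card = n + 1 ∧ ∑ i ∈ s, i = m) ∧ 0 ∈ s} := by
  constructor
  rintro ⟨s, ⟨hc, hsum⟩, h0⟩
  have h1 : (s.erase 0).card • 1 ≤ ∑ i ∈ s.erase 0, i :=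
    Finset.card_nsmul_le_sum _ _ 1 (fun x hx =>
      Nat.one_le_iff_ne_zero.mpr (Finset.ne_of_mem_erase hx))
  have h2 : ∑ i ∈ s.erase 0, i = m := by
    have := Finset.add_sum_erase s (fun i => i) h0
    omega
  simp only [smul_eq_mul, mul_one, h2] at h1
  rw [Finset.card_erase_of_mem h0, hc] at h1
  omega

lemma a_rec (n m : ℕ) :
    a (n + 1) m = (if n + 1 ≤ m then a (n + 1) (m - (n + 1)) else 0)
      + (if n ≤ m then a n (m - n) else 0) := by
  have hsplit := card_split (fun s : Finset ℕ => s.card = n + 1 ∧ ∑ i ∈ s, i = m)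
    (fun s => 0 ∈ s)
  rw [show a (n + 1) m = Nat.card {s : Finset ℕ // s.card = n + 1 ∧ ∑ i ∈ s, i = m} from rfl,
    hsplit, add_comm]
  congr 1
  · split
    · rename_i hm
      obtain ⟨k, rfl⟩ : ∃ k, m = k + (n + 1) := ⟨m - (n + 1), by omega⟩
      rw [Nat.add_sub_cancel]
      exact notmem_equiv (n + 1) k
    · rename_i hm
      haveI := notmem_empty (n + 1) m (by omega)
      exact Nat.card_of_isEmpty
  · split
    · rename_i hm
      obtain ⟨k, rfl⟩ : ∃ k, m = k + n := ⟨m - n, by omega⟩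
      rw [Nat.add_sub_cancel]
      exact mem_equiv n k
    · rename_i hm
      haveI := mem_empty n m (by omega)
      exact Nat.card_of_isEmpty

noncomputable def A (n : ℕ) : PowerSeries ℚ :=
  PowerSeries.mk (fun m => (a n m : ℚ))

lemma key (n : ℕ) : A (n + 1) * (1 - X ^ (n + 1)) = X ^ n * A n := by
  ext m
  rw [mul_sub, mul_one, map_sub, coeff_mul_X_pow', coeff_X_pow_mul']
  simp only [A, coeff_mk]
  rw [a_rec n m]
  push_cast
  split <;> split <;> simp

theorem stmt9 (n : ℕ) :
    (PowerSeries.mk (fun m =>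
        (Nat.card {s : Finset ℕ // s.card = n ∧ ∑ i ∈ s, i = m} : ℚ)) :
      PowerSeries ℚ)
      * ∏ k ∈ Finset.Icc 1 n, (1 - (PowerSeries.X : PowerSeries ℚ) ^ k)
      = (PowerSeries.X : PowerSeries ℚ) ^ (n * (n - 1) / 2) := by
  have hA : ∀ n : ℕ, (PowerSeries.mk (fun m =>
      (Nat.card {s : Finset ℕ // s.card = n ∧ ∑ i ∈ s, i = m} : ℚ)) :
      PowerSeries ℚ) = A n := fun n => rfl
  rw [hA]
  induction n with
  | zero =>
    simp only [Finset.Icc_self, Nat.zero_sub]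
    rw [show Finset.Icc 1 0 = ∅ from rfl]
    simp only [Finset.prod_empty, mul_one, Nat.zero_mul, Nat.zero_div, pow_zero]
    ext m
    simp only [A, coeff_mk, coeff_one, a_zero]
    split <;> simp_all
  | succ n ih =>
    rw [Finset.prod_Icc_succ_top (by omega : 1 ≤ n + 1)]
    calc A (n + 1) * ((∏ k ∈ Finset.Icc 1 n, (1 - X ^ k)) * (1 - X ^ (n + 1)))
        = (A (n + 1) * (1 - X ^ (n + 1))) * ∏ k ∈ Finset.Icc 1 n, (1 - X ^ k) := by ring
      _ = X ^ n * (A n * ∏ k ∈ Finset.Icc 1 n, (1 - X ^ k)) := by rw [key]; ring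
      _ = X ^ n * X ^ (n * (n - 1) / 2) := by rw [ih]
      _ = X ^ ((n + 1) * (n + 1 - 1) / 2) := by
          rw [← pow_add]
          congr 1
          have h1 : (n + 1) * (n + 1 - 1) / 2 = (n + 1).choose 2 := (Nat.choose_two_right _).symm
          have h2 : n * (n - 1) / 2 = n.choose 2 := (Nat.choose_two_right _).symm
          rw [h1, h2, Nat.choose_succ_succ n 1, Nat.choose_one_right]

end Stmt9Aux

open PowerSeries

theorem stmt9 (n : ℕ) :
    (PowerSeries.mk (fun m =>
        (Nat.card {s : Finset ℕ // s.card = n ∧ ∑ i ∈ s, i = m} : ℚ)) :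
      PowerSeries ℚ)
      * ∏ k ∈ Finset.Icc 1 n, (1 - (PowerSeries.X : PowerSeries ℚ) ^ k)
      = (PowerSeries.X : PowerSeries ℚ) ^ (n * (n - 1) / 2) := Stmt9Aux.stmt9 n
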